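/- arXiv:2110.03808 — 3 statements merged into one kernel-verified Lean document; each statement's English description precedes it below -/
import Mathlib

section
/- Fix m ∈ ℤ and i ≥ m. The partial-sum functional (s,a) ↦ Σ_{j=m}^{i} D_{m,0}(s,a)_j of the empty-start queueing map is monotone non-decreasing in both arguments: if s^1 ≤ s^2 and a^1 ≤ a^2 entrywise, then Σ_{j=m}^{i} D_{m,0}(s^1,a^1)_j ≤ Σ_{j=m}^{i} D_{m,0}(s^2,a^2)_j. -/
open Filter


namespace SH

noncomputable def pospart (x : ℝ) : ℝ := max x 0
noncomputable def negpart (x : ℝ) : ℝ := max (-x) 0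

noncomputable def wait (s a : ℤ → ℝ) (i : ℤ) : ℝ :=
  sSup ((fun j => pospart (∑ k ∈ Finset.Icc j i, (s (k - 1) - a k))) '' Set.Iic i)

noncomputable def Dq (s a : ℤ → ℝ) (i : ℤ) : ℝ :=
  negpart (wait s a (i - 1) + s (i - 1) - a i) + s i

def Stable (s a : ℤ → ℝ) : Prop :=
  Tendsto (fun m : ℤ => ∑ i ∈ Finset.Icc m 0, (s (i - 1) - a i)) atBot atBot

/-- Sojourn times of the queue started empty at time `m`: `Jp s a m k` is `J'_{m-1+k}`,
with `J'_{m-1} = 0` and `J'_i = (a_i - J'_{i-1})^- + s_i` for `i ≥ m`. -/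
noncomputable def Jp (s a : ℤ → ℝ) (m : ℤ) : ℕ → ℝ
  | 0 => 0
  | k + 1 => negpart (a (m + (k : ℤ)) - Jp s a m k) + s (m + (k : ℤ))

/-- The queueing map started empty at time `m`:
`D_{m,0}(s,a)_i = (J'_{i-1} - a_i)^- + s_i` for `i ≥ m`. -/
noncomputable def Dm0 (s a : ℤ → ℝ) (m i : ℤ) : ℝ :=
  negpart (Jp s a m (i - m).toNat - a i) + s i


lemma negpart_sub_negpart_neg (x : ℝ) : negpart x - negpart (-x) = -x := by
  unfold negpart
  rcases le_total x 0 with h | h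
  · rw [max_eq_left (by linarith), max_eq_right (by linarith)]; ring
  · rw [max_eq_right (by linarith), max_eq_left (by linarith)]; ring

lemma dm0_eq (s a : ℤ → ℝ) (m : ℤ) (n : ℕ) :
    Dm0 s a m (m + n) = Jp s a m (n + 1) - Jp s a m n + a (m + n) := by
  have ht : (m + (n : ℤ) - m).toNat = n := by omega
  unfold Dm0
  rw [ht]
  show negpart (Jp s a m n - a (m + n)) + s (m + n) =
    (negpart (a (m + (n : ℤ)) - Jp s a m n) + s (m + (n : ℤ))) - Jp s a m n + a (m + n)
  have := negpart_sub_negpart_neg (Jp s a m n - a (m + n))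
  have hneg : -(Jp s a m n - a (m + (n:ℤ))) = a (m + (n:ℤ)) - Jp s a m n := by ring
  rw [hneg] at this
  linarith

lemma sumD (s a : ℤ → ℝ) (m : ℤ) (N : ℕ) :
    ∑ j ∈ Finset.Icc m (m + N), Dm0 s a m j =
      Jp s a m (N + 1) + ∑ j ∈ Finset.range (N + 1), a (m + j) := by
  induction N with
  | zero =>
    simp only [Nat.cast_zero, add_zero, Finset.Icc_self, Finset.sum_singleton,
      Finset.range_one, Finset.sum_singleton]
    have := dm0_eq s a m 0
    simpa [Jp] using this
  | succ N ih =>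
    have hcast : m + ((N : ℤ) + 1) = (m + N) + 1 := by ring
    have hle : m ≤ m + (N : ℤ) + 1 := by omega
    rw [show (m + ((N + 1 : ℕ) : ℤ)) = (m + (N : ℤ)) + 1 by push_cast; ring]
    have hins : Finset.Icc m (m + (N : ℤ) + 1) = insert (m + (N : ℤ) + 1) (Finset.Icc m (m + (N : ℤ))) := by
      ext x; simp only [Finset.mem_Icc, Finset.mem_insert]; omega
    rw [hins, Finset.sum_insert (by simp)]
    rw [ih]
    have hd := dm0_eq s a m (N + 1)
    rw [show (m + ((N + 1 : ℕ) : ℤ)) = (m + (N : ℤ)) + 1 by push_cast; ring] at hd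
    rw [hd]
    have hr : ∑ j ∈ Finset.range (N + 1 + 1), a (m + (j : ℤ)) =
        ∑ j ∈ Finset.range (N + 1), a (m + (j : ℤ)) + a (m + ((N + 1 : ℕ) : ℤ)) :=
      Finset.sum_range_succ _ _
    rw [hr, show (m + ((N + 1 : ℕ) : ℤ)) = (m + (N : ℤ)) + 1 by push_cast; ring]
    ring

lemma Umono (s1 s2 a1 a2 : ℤ → ℝ) (hs : ∀ j, s1 j ≤ s2 j) (ha : ∀ j, a1 j ≤ a2 j)
    (m : ℤ) : ∀ k : ℕ,
    Jp s1 a1 m k + ∑ j ∈ Finset.range k, a1 (m + j) ≤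
      Jp s2 a2 m k + ∑ j ∈ Finset.range k, a2 (m + j) := by
  intro k
  induction k with
  | zero => simp [Jp]
  | succ k ih =>
    have hsum : ∑ j ∈ Finset.range k, a1 (m + j) ≤ ∑ j ∈ Finset.range k, a2 (m + j) :=
      Finset.sum_le_sum fun j _ => ha _
    show negpart (a1 (m + (k : ℤ)) - Jp s1 a1 m k) + s1 (m + (k : ℤ)) + _ ≤
      negpart (a2 (m + (k : ℤ)) - Jp s2 a2 m k) + s2 (m + (k : ℤ)) + _
    rw [Finset.sum_range_succ, Finset.sum_range_succ]
    unfold negpart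
    rcases le_total (a1 (m + (k:ℤ)) - Jp s1 a1 m k) 0 with h1 | h1 <;>
      rcases le_total (a2 (m + (k:ℤ)) - Jp s2 a2 m k) 0 with h2 | h2 <;>
      [rw [max_eq_left (by linarith), max_eq_left (by linarith)];
       rw [max_eq_left (by linarith), max_eq_right (by linarith)];
       rw [max_eq_right (by linarith), max_eq_left (by linarith)];
       rw [max_eq_right (by linarith), max_eq_right (by linarith)]] <;>
      [linarith [hs (m + (k:ℤ)), ha (m + (k:ℤ))];
       linarith [hs (m + (k:ℤ)), ha (m + (k:ℤ))];
       linarith [hs (m + (k:ℤ)), ha (m + (k:ℤ))];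
       linarith [hs (m + (k:ℤ)), ha (m + (k:ℤ))]]

/-- Monotonicity of partial sums of the empty-start queueing map in both arguments. -/
theorem emptyStart_partialSum_mono (m i : ℤ) (him : m ≤ i) (s1 s2 a1 a2 : ℤ → ℝ)
    (hs : ∀ j, s1 j ≤ s2 j) (ha : ∀ j, a1 j ≤ a2 j) :
    ∑ j ∈ Finset.Icc m i, Dm0 s1 a1 m j ≤ ∑ j ∈ Finset.Icc m i, Dm0 s2 a2 m j := by
  obtain ⟨N, hN⟩ : ∃ N : ℕ, i = m + N := ⟨(i - m).toNat, by omega⟩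
  subst hN
  rw [sumD s1 a1 m N, sumD s2 a2 m N]
  exact Umono s1 s2 a1 a2 hs ha m (N + 1)

end SH
end

section
/- Let k = 2 base case: For integers m ≤ n and sequences I^0, I^1, I^2 ∈ ℝ^ℤ, Φ_{m,n}( D_{m,0}(I^1, I^2) - I^0 ) ≤ Φ_{m,n}(I^1 - I^0) + Φ_{m,n}(I^2 - I^1) + M_{m,n}(I^2), where Φ_{m,n}(I) = (sup_{m≤i≤n} Σ_{j=m}^{i} I_j)^+ and M_{m,n}(I) = max_{m≤i≤n} |I_i|. -/
open Filter

namespace SH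

/-- `Φ_{m,n}(I) = (sup_{m ≤ i ≤ n} ∑_{j=m}^i I_j)^+`. -/
noncomputable def Phi (m n : ℤ) (I : ℤ → ℝ) : ℝ :=
  pospart (sSup ((fun i => ∑ j ∈ Finset.Icc m i, I j) '' Set.Icc m n))

/-- `M_{m,n}(I) = max_{m ≤ i ≤ n} |I_i|`. -/
noncomputable def Mx (m n : ℤ) (I : ℤ → ℝ) : ℝ :=
  sSup ((fun i => |I i|) '' Set.Icc m n)

private lemma sum_Icc_top {m i : ℤ} (h : m ≤ i + 1) (f : ℤ → ℝ) :
    ∑ j ∈ Finset.Icc m (i+1), f j = (∑ j ∈ Finset.Icc m i, f j) + f (i+1) := by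
  have : Finset.Icc m (i+1) = insert (i+1) (Finset.Icc m i) := by
    ext x; simp only [Finset.mem_Icc, Finset.mem_insert]; omega
  rw [this, Finset.sum_insert (by simp)]; ring

/-- Base case `k = 2`:
`Φ_{m,n}(D_{m,0}(I¹,I²) - I⁰) ≤ Φ_{m,n}(I¹-I⁰) + Φ_{m,n}(I²-I¹) + M_{m,n}(I²)`. -/
theorem Phi_emptyStart_two (m n : ℤ) (hmn : m ≤ n) (I0 I1 I2 : ℤ → ℝ) :
    Phi m n (fun i => Dm0 I1 I2 m i - I0 i) ≤
      Phi m n (fun i => I1 i - I0 i) + Phi m n (fun i => I2 i - I1 i) + Mx m n I2 := by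
  set Kf : ℤ → ℝ := fun i => Jp I1 I2 m (i + 1 - m).toNat with hKf
  have hfin : ∀ (f : ℤ → ℝ), BddAbove (f '' Set.Icc m n) :=
    fun f => (Set.Finite.image f (Set.finite_Icc m n)).bddAbove
  have hK0 : Kf (m - 1) = 0 := by
    have h0 : (m - 1 + 1 - m).toNat = 0 := by omega
    simp only [hKf, h0]; rfl
  have hKrec : ∀ i : ℤ, m ≤ i → Kf i = max (Kf (i-1) - I2 i) 0 + I1 i := by
    intro i hi
    have h1 : (i + 1 - m).toNat = (i - m).toNat + 1 := by omega
    have h2 : (i - 1 + 1 - m).toNat = (i - m).toNat := by omega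
    have h3 : m + ((i - m).toNat : ℤ) = i := by omega
    simp only [hKf, h1, h2, Jp, negpart, h3, neg_sub]
  have hD : ∀ i : ℤ, m ≤ i → Dm0 I1 I2 m i = Kf i - Kf (i-1) + I2 i := by
    intro i hi
    have h2 : (i - 1 + 1 - m).toNat = (i - m).toNat := by omega
    have hJ : Jp I1 I2 m (i - m).toNat = Kf (i - 1) := by simp only [hKf, h2]
    rw [Dm0, hJ, hKrec i hi, negpart, neg_sub]
    rcases le_total (Kf (i-1)) (I2 i) with h | h
    · rw [max_eq_left (by linarith), max_eq_right (by linarith)]; ring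
    · rw [max_eq_right (by linarith), max_eq_left (by linarith)]; ring
  have hsum : ∀ i : ℤ, m ≤ i →
      ∑ j ∈ Finset.Icc m i, Dm0 I1 I2 m j = Kf i + ∑ j ∈ Finset.Icc m i, I2 j := by
    refine Int.le_induction ?_ ?_
    · rw [Finset.Icc_self, Finset.sum_singleton, Finset.sum_singleton, hD m le_rfl, hK0]; ring
    · intro i hi ih
      rw [sum_Icc_top (by omega), sum_Icc_top (by omega), ih, hD (i+1) (by omega)]
      have : i + 1 - 1 = i := by ring
      rw [this]; ring
  set C : ℝ := Phi m n (fun i => I2 i - I1 i) + Mx m n I2 with hC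
  have hM : ∀ i : ℤ, m ≤ i → i ≤ n → |I2 i| ≤ Mx m n I2 := by
    intro i h1 h2
    exact le_csSup (hfin _) ⟨i, ⟨h1, h2⟩, rfl⟩
  have hP2 : ∀ i : ℤ, m ≤ i → i ≤ n →
      ∑ j ∈ Finset.Icc m i, (I2 j - I1 j) ≤ Phi m n (fun i => I2 i - I1 i) := by
    intro i h1 h2
    exact le_trans (le_csSup (hfin _) ⟨i, ⟨h1, h2⟩, rfl⟩) (le_max_left _ _)
  have hMnn : 0 ≤ Mx m n I2 := le_trans (abs_nonneg _) (hM m le_rfl hmn)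
  have hPnn : ∀ I : ℤ → ℝ, 0 ≤ Phi m n I := fun I => le_max_right _ _
  have hCnn : 0 ≤ C := add_nonneg (hPnn _) hMnn
  have hneg : ∀ i : ℤ, ∑ j ∈ Finset.Icc m i, (I2 j - I1 j)
      = -∑ j ∈ Finset.Icc m i, (I1 j - I2 j) := by
    intro i
    rw [← Finset.sum_neg_distrib]
    exact Finset.sum_congr rfl fun j _ => (neg_sub _ _).symm
  have hbound : ∀ i : ℤ, m ≤ i → i ≤ n →
      Kf i - ∑ j ∈ Finset.Icc m i, (I1 j - I2 j) ≤ C := by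
    refine Int.le_induction ?_ ?_
    · intro _
      rw [Finset.Icc_self, Finset.sum_singleton, hKrec m le_rfl, hK0]
      have h1 : max (0 - I2 m) 0 + I1 m - (I1 m - I2 m) ≤ |I2 m| := by
        rcases le_total (I2 m) 0 with h | h
        · rw [max_eq_left (by linarith), abs_of_nonpos h]; linarith
        · rw [max_eq_right (by linarith), abs_of_nonneg h]; linarith
      calc max (0 - I2 m) 0 + I1 m - (I1 m - I2 m) ≤ |I2 m| := h1
        _ ≤ Mx m n I2 := hM m le_rfl hmn
        _ ≤ C := by rw [hC]; linarith [hPnn (fun i => I2 i - I1 i)]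
    · intro i hi ih hn
      have hin : i ≤ n := by omega
      have IH := ih hin
      clear ih
      rw [sum_Icc_top (by omega), hKrec (i+1) (by omega)]
      have : i + 1 - 1 = i := by ring
      rw [this]
      rcases le_total (Kf i) (I2 (i+1)) with h | h
      · rw [max_eq_right (by linarith)]
        have h2 := hP2 i hi hin
        rw [hneg i] at h2
        have h3 : I2 (i+1) ≤ |I2 (i+1)| := le_abs_self _
        have h4 := hM (i+1) (by omega) hn
        rw [hC]; linarith
      · rw [max_eq_left (by linarith)]
        linarith
  -- final assembly
  have hg : ∀ i : ℤ, m ≤ i → i ≤ n →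
      ∑ j ∈ Finset.Icc m i, (Dm0 I1 I2 m j - I0 j)
        ≤ Phi m n (fun i => I1 i - I0 i) + C := by
    intro i h1 h2
    have e1 : ∑ j ∈ Finset.Icc m i, (Dm0 I1 I2 m j - I0 j)
        = (∑ j ∈ Finset.Icc m i, Dm0 I1 I2 m j) - ∑ j ∈ Finset.Icc m i, I0 j :=
      Finset.sum_sub_distrib _ _
    have e2 : ∑ j ∈ Finset.Icc m i, (I1 j - I0 j)
        = (∑ j ∈ Finset.Icc m i, I1 j) - ∑ j ∈ Finset.Icc m i, I0 j :=
      Finset.sum_sub_distrib _ _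
    have e3 : ∑ j ∈ Finset.Icc m i, (I1 j - I2 j)
        = (∑ j ∈ Finset.Icc m i, I1 j) - ∑ j ∈ Finset.Icc m i, I2 j :=
      Finset.sum_sub_distrib _ _
    have h4 : ∑ j ∈ Finset.Icc m i, (I1 j - I0 j) ≤ Phi m n (fun i => I1 i - I0 i) :=
      le_trans (le_csSup (hfin _) ⟨i, ⟨h1, h2⟩, rfl⟩) (le_max_left _ _)
    have h5 := hbound i h1 h2
    have h6 := hsum i h1
    rw [e3] at h5
    rw [e1, h6]
    linarith
  rw [Phi, pospart]
  apply max_le _ (by linarith [hPnn (fun i => I1 i - I0 i)])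
  apply csSup_le ((Set.nonempty_Icc.mpr hmn).image _)
  rintro x ⟨i, ⟨h1, h2⟩, rfl⟩
  have := hg i h1 h2
  rw [hC] at this
  simpa [add_assoc] using this

end SH
end

section
/- The map Q: C(ℝ)×C(ℝ) → C(ℝ) defined by Q(f,g)(t) = f(t) + [W_0(f-g) + inf_{0≤s≤t}(f(s)-g(s))]^- for t ≥ 0, and Q(f,g)(t) = f(t) - [W_t(f-g) + inf_{t<s≤0}(f(s)-f(t)-(g(s)-g(t)))]^- for t < 0, where W_t(h) = sup_{s≤t}(h(t)-h(s)), is NOT continuous with respect to the topology of uniform convergence on compact sets: there exists a sequence (f^n, g^n) → (f, g) in C(ℝ)² with Q(f^n, g^n) not converging to Q(f,g). -/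
open Filter

namespace SH

/-- `W_t(h) = sup_{s ≤ t} (h(t) - h(s))`. -/
noncomputable def Wt (t : ℝ) (h : ℝ → ℝ) : ℝ :=
  sSup ((fun s => h t - h s) '' Set.Iic t)

/-- The continuum queueing map `Q`. -/
noncomputable def Qc (f g : ℝ → ℝ) (t : ℝ) : ℝ :=
  if 0 ≤ t then
    f t + negpart (Wt 0 (fun x => f x - g x) +
      sInf ((fun s => f s - g s) '' Set.Icc 0 t))
  else
    f t - negpart (Wt t (fun x => f x - g x) +
      sInf ((fun s => f s - f t - (g s - g t)) '' Set.Ioc t 0))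

/-- the spike sequence -/
noncomputable def Fs (n : ℕ) (x : ℝ) : ℝ := -(2*n) * max (1 - |x + (n+1)|) 0

lemma Fs_eq_zero (n : ℕ) (y : ℝ) (h : -(n:ℝ) ≤ y) : Fs n y = 0 := by
  have h1 : (1:ℝ) - |y + (n+1)| ≤ 0 := by
    have := le_abs_self (y + ((n:ℝ)+1)); linarith
  rw [Fs, max_eq_right h1, mul_zero]

lemma Fs_ge (n : ℕ) (y : ℝ) : -(2*(n:ℝ)) ≤ Fs n y := by
  have h0 : (0:ℝ) ≤ max (1 - |y + ((n:ℝ)+1)|) 0 := le_max_right _ _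
  have h1 : max (1 - |y + ((n:ℝ)+1)|) 0 ≤ 1 := by
    apply max_le _ zero_le_one
    have := abs_nonneg (y + ((n:ℝ)+1)); linarith
  rw [Fs]
  nlinarith [Nat.cast_nonneg (α := ℝ) n]

lemma Fs_spike (n : ℕ) : Fs n (-((n:ℝ)+1)) = -(2*n) := by
  rw [Fs, show -((n:ℝ)+1) + ((n:ℝ)+1) = 0 by ring, abs_zero]
  norm_num

lemma Fs_zero (n : ℕ) : Fs n 0 = 0 :=
  Fs_eq_zero n 0 (neg_nonpos.mpr (Nat.cast_nonneg n))

lemma negpart_of_nonneg {x : ℝ} (h : 0 ≤ x) : negpart x = 0 :=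
  max_eq_right (by linarith)

lemma negpart_of_nonpos {x : ℝ} (h : x ≤ 0) : negpart x = -x :=
  max_eq_left (by linarith)

lemma Qc_limit : Qc (fun _ => (0:ℝ)) (fun x => x) 1 = 1 := by
  rw [Qc, if_pos (by norm_num : (0:ℝ) ≤ 1)]
  have hW : Wt 0 (fun x => (0:ℝ) - x) = 0 := by
    rw [Wt]
    have : ((fun s => (fun x => (0:ℝ) - x) 0 - (fun x => (0:ℝ) - x) s) '' Set.Iic 0)
        = Set.Iic 0 := by
      have : (fun s => (fun x => (0:ℝ) - x) 0 - (fun x => (0:ℝ) - x) s) = fun s => s := by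
        funext s; simp
      rw [this, Set.image_id']
    rw [this, csSup_Iic]
  have hI : sInf ((fun s => (0:ℝ) - s) '' Set.Icc 0 1) = -1 := by
    apply IsLeast.csInf_eq
    constructor
    · exact ⟨1, by norm_num, by norm_num⟩
    · rintro _ ⟨s, hs, rfl⟩
      have := hs.2; simp only; linarith
  rw [hW, hI, zero_add, negpart_of_nonpos (by norm_num), zero_add]
  norm_num

lemma Qc_seq (n : ℕ) (hn : 2 ≤ n) : Qc (Fs n) (fun x => x) 1 = 0 := by
  rw [Qc, if_pos (by norm_num : (0:ℝ) ≤ 1)]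
  have hn2 : (2:ℝ) ≤ (n:ℝ) := by exact_mod_cast hn
  have hW : (n:ℝ) - 1 ≤ Wt 0 (fun x => Fs n x - x) := by
    rw [Wt]
    apply le_csSup
    · refine ⟨2*(n:ℝ), ?_⟩
      rintro _ ⟨s, hs, rfl⟩
      simp only [Set.mem_Iic] at hs
      have h1 := Fs_ge n s
      simp only [Fs_zero, sub_zero, zero_sub]
      linarith
    · refine ⟨-((n:ℝ)+1), Set.mem_Iic.mpr (by have := Nat.cast_nonneg (α := ℝ) n; linarith), ?_⟩
      simp only [Fs_zero, Fs_spike, sub_zero, zero_sub]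
      ring
  have hI : (-1:ℝ) ≤ sInf ((fun s => Fs n s - s) '' Set.Icc 0 1) := by
    apply le_csInf
    · exact ⟨_, ⟨0, by norm_num, rfl⟩⟩
    · rintro _ ⟨s, hs, rfl⟩
      have h0 : Fs n s = 0 := Fs_eq_zero n s (by have := hs.1; have := Nat.cast_nonneg (α := ℝ) n; linarith)
      simp only [h0, zero_sub]
      have := hs.2; linarith
  have hF1 : Fs n 1 = 0 := Fs_eq_zero n 1 (by have := Nat.cast_nonneg (α := ℝ) n; linarith)
  rw [hF1, negpart_of_nonneg (by linarith), add_zero]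

/-- The continuum queueing map `Q` is not continuous for uniform convergence on
compact sets. -/
theorem Qc_not_continuous :
    ∃ (F G : ℕ → ℝ → ℝ) (f g : ℝ → ℝ),
      (∀ n, Continuous (F n)) ∧ (∀ n, Continuous (G n)) ∧
      Continuous f ∧ Continuous g ∧
      TendstoLocallyUniformly F f atTop ∧
      TendstoLocallyUniformly G g atTop ∧
      ¬ TendstoLocallyUniformly (fun n => Qc (F n) (G n)) (Qc f g) atTop := by
  refine ⟨Fs, fun _ x => x, fun _ => 0, fun x => x, ?_, fun _ => continuous_id, continuous_const,
    continuous_id, ?_, ?_, ?_⟩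
  · intro n
    unfold Fs
    fun_prop
  · rw [Metric.tendstoLocallyUniformly_iff]
    intro ε hε x
    refine ⟨Metric.ball x 1, Metric.ball_mem_nhds x one_pos, ?_⟩
    have : ∀ᶠ n : ℕ in atTop, (1:ℝ) - x ≤ (n:ℝ) :=
      tendsto_natCast_atTop_atTop.eventually_ge_atTop _
    filter_upwards [this] with n hn y hy
    have hy' : |y - x| < 1 := by simpa [Real.dist_eq] using hy
    have : Fs n y = 0 := by
      apply Fs_eq_zero
      have := abs_lt.1 hy'
      linarith [this.1]
    simp [this, hε]
  · rw [Metric.tendstoLocallyUniformly_iff]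
    intro ε hε x
    exact ⟨Metric.ball x 1, Metric.ball_mem_nhds x one_pos, by
      filter_upwards with n y _ using by simpa using hε⟩
  · intro h
    have h1 := (tendstoLocallyUniformlyOn_univ.mpr h).tendsto_at (Set.mem_univ (1:ℝ))
    rw [Qc_limit] at h1
    have h0 : Tendsto (fun n => Qc (Fs n) (fun x => x) 1) atTop (nhds 0) := by
      apply Tendsto.congr' _ tendsto_const_nhds
      filter_upwards [eventually_ge_atTop 2] with n hn
      exact (Qc_seq n hn).symm
    have := tendsto_nhds_unique h0 h1
    norm_num at this


end SH
end
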